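/- Let f : ℂ → ℂ be analytic at z₀ with f(z₀) = 0 and f′(z₀) ≠ 0 (a simple zero). Then the desingularized Newton field V_f, regarded as a map ℂ → ℂ over ℝ, is real Fréchet differentiable at z₀ with derivative the real-linear map dz ↦ −|f′(z₀)|² · dz, i.e. HasFDerivAt V_f (−|f′(z₀)|² • id) z₀. In particular both eigenvalues of the linearization equal −|f′(z₀)|² < 0, so a simple zero is a hyperbolic attractor of the desingularized Newton flow. -/

import Mathlib

open Complex

noncomputable def desingNewton (f : ℂ → ℂ) (z : ℂ) : ℂ :=
  -(((1 + ‖f z‖ ^ 4 : ℝ) : ℂ))⁻¹ * (starRingEnd ℂ) (deriv f z) * f z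

theorem desingNewton_simple_zero_attractor
    (f : ℂ → ℂ) (z₀ : ℂ) (hf : AnalyticAt ℂ f z₀)
    (h0 : f z₀ = 0) (h1 : deriv f z₀ ≠ 0) :
    HasFDerivAt (desingNewton f)
      ((-(‖deriv f z₀‖ ^ 2) : ℝ) • ContinuousLinearMap.id ℝ ℂ) z₀ ∧
    (-(‖deriv f z₀‖ ^ 2) : ℝ) < 0 := by
  constructor
  · set c : ℂ → ℂ := fun z => -(((1 + ‖f z‖ ^ 4 : ℝ) : ℂ))⁻¹ * (starRingEnd ℂ) (deriv f z)
    have hfc : DifferentiableAt ℝ f z₀ := (hf.differentiableAt).restrictScalars ℝ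
    have hderiv : DifferentiableAt ℝ (deriv f) z₀ := by
      have h2 : DifferentiableAt ℂ (fun z => fderiv ℂ f z 1) z₀ :=
        (hf.fderiv.differentiableAt).clm_apply (differentiableAt_const 1)
      have h3 : deriv f = fun z => fderiv ℂ f z 1 := by
        funext z; rw [fderiv_apply_one_eq_deriv]
      rw [h3]
      exact h2.restrictScalars ℝ
    have habs : DifferentiableAt ℝ (fun z => ((1 + ‖f z‖ ^ 4 : ℝ) : ℂ)) z₀ := by
      have hg : DifferentiableAt ℝ (fun z => (1 + ‖f z‖ ^ 4 : ℝ)) z₀ := by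
        have : (fun z => (1 + ‖f z‖ ^ 4 : ℝ)) =
            fun z => (1 : ℝ) + (Complex.normSq (f z))^2 := by
          funext z
          rw [← Complex.sq_norm]
          ring
        rw [this]
        have hns : DifferentiableAt ℝ (fun z => Complex.normSq (f z)) z₀ := by
          have he : (fun z => Complex.normSq (f z)) =
              fun z => Complex.reCLM (f z) * Complex.reCLM (f z) +
                Complex.imCLM (f z) * Complex.imCLM (f z) := by
            funext z; simp [Complex.normSq_apply]
          rw [he]
          have hre := (Complex.reCLM.differentiableAt).comp z₀ hfc
          have him := (Complex.imCLM.differentiableAt).comp z₀ hfc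
          exact (hre.mul hre).add (him.mul him)
        exact (differentiableAt_const 1).add (hns.pow 2)
      exact Complex.ofRealCLM.differentiableAt.comp z₀ hg
    have hne : ((1 + ‖f z₀‖ ^ 4 : ℝ) : ℂ) ≠ 0 := by
      simp [h0]
    have hc : DifferentiableAt ℝ c z₀ := by
      apply DifferentiableAt.mul
      · exact (habs.inv hne).neg
      · exact Complex.conjCLE.differentiableAt.comp z₀ hderiv
    have hF : HasFDerivAt f ((fderiv ℂ f z₀).restrictScalars ℝ) z₀ :=
      (hf.differentiableAt.hasFDerivAt).restrictScalars ℝ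
    have key : HasFDerivAt (fun z => c z * f z)
        (c z₀ • (fderiv ℂ f z₀).restrictScalars ℝ +
          (fderiv ℝ c z₀).smulRight (f z₀)) z₀ :=
      (hc.hasFDerivAt).mul' hF
    have hfun : desingNewton f = fun z => c z * f z := rfl
    rw [hfun]
    convert key using 1
    rw [h0]
    ext w
    simp only [ContinuousLinearMap.add_apply, ContinuousLinearMap.smulRight_apply,
      ContinuousLinearMap.smul_apply, ContinuousLinearMap.coe_restrictScalars',
      ContinuousLinearMap.coe_smul', ContinuousLinearMap.id_apply, smul_zero, add_zero,
      Pi.smul_apply]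
    have hfd : fderiv ℂ f z₀ w = w * deriv f z₀ := by
      rw [← fderiv_apply_one_eq_deriv]
      calc fderiv ℂ f z₀ w = fderiv ℂ f z₀ (w • 1) := by simp
      _ = w • fderiv ℂ f z₀ 1 := by rw [map_smul]
      _ = w * deriv f z₀ := by simp [fderiv_apply_one_eq_deriv]
    rw [hfd]
    have hms : (starRingEnd ℂ) (deriv f z₀) * deriv f z₀ =
        ((‖deriv f z₀‖ ^ 2 : ℝ) : ℂ) := by
      rw [← Complex.normSq_eq_norm_sq, Complex.normSq_eq_conj_mul_self]
    simp only [c, h0, map_zero, AbsoluteValue.map_zero, norm_zero, Complex.real_smul, smul_eq_mul]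
    push_cast
    rw [mul_comm w (deriv f z₀), ← mul_assoc, mul_assoc _ _ (deriv f z₀), hms]
    push_cast
    ring
  · have := norm_pos_iff.mpr h1
    simp only [neg_lt_zero]
    positivity
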